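/- (3-valent vertex addition preserves infinitesimal motions.) Let (G, p) be a framework in ℝ³, let a, b, c be three distinct vertices of G, and let G' be the graph obtained from G by adding one new vertex v₀ together with the three edges {v₀, a}, {v₀, b}, {v₀, c}. Let q ∈ ℝ³ be such that the four points q, p a, p b, p c are affinely independent (q is not coplanar with p a, p b, p c), and let p' extend p by p' v₀ = q. Then the restriction map v ↦ v|_{V(G)} is a linear isomorphism from the space of infinitesimal motions of (G', p') onto the space of infinitesimal motions of (G, p); in particular, every infinitesimal motion of (G, p) extends in exactly one way to an infinitesimal motion of (G', p'). -/

import Mathlib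

open Matrix

/-- The space of infinitesimal motions of the framework `(G, p)`:
velocities `v` with `⟨p i − p j, v i − v j⟩ = 0` on every edge. -/
def motionSpace {V : Type*} (G : SimpleGraph V) (p : V → Fin 3 → ℝ) :
    Submodule ℝ (V → Fin 3 → ℝ) where
  carrier := {v | ∀ i j : V, G.Adj i j → (p i - p j) ⬝ᵥ (v i - v j) = 0}
  zero_mem' := by simp
  add_mem' := by
    intro f g hf hg i j hij
    have h : (f + g) i - (f + g) j = (f i - f j) + (g i - g j) := by
      simp only [Pi.add_apply]; abel
    rw [h, dotProduct_add, hf i j hij, hg i j hij, add_zero]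
  smul_mem' := by
    intro c f hf i j hij
    have h : (c • f) i - (c • f) j = c • (f i - f j) := by
      simp only [Pi.smul_apply, smul_sub]
    rw [h, dotProduct_smul, hf i j hij, smul_zero]

/-- The graph `G'` obtained from `G` by adding one new vertex (`none`) joined to the three
vertices `a`, `b`, `c`. -/
def addVertex {V : Type*} (G : SimpleGraph V) (a b c : V) : SimpleGraph (Option V) where
  Adj x y :=
    match x, y with
    | some i, some j => G.Adj i j
    | none, some j => j = a ∨ j = b ∨ j = c
    | some i, none => i = a ∨ i = b ∨ i = c
    | none, none => False
  symm := ⟨by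
    rintro (_ | i) (_ | j) h
    · exact h
    · exact h
    · exact h
    · exact G.adj_symm h⟩
  loopless := ⟨by
    rintro (_ | i) h
    · exact h
    · exact G.irrefl h⟩


private lemma dot_lin {u : Fin 3 → ℝ} : IsLinearMap ℝ (fun w : Fin 3 → ℝ => u ⬝ᵥ w) :=
  ⟨fun x y => dotProduct_add u x y, fun c x => dotProduct_smul c u x⟩

/-- If `u 0, u 1, u 2` are linearly independent in `ℝ³` and `w` is orthogonal to all of
them, then `w = 0`. -/
private lemma eq_zero_of_dot_eq_zero {u : Fin 3 → Fin 3 → ℝ}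
    (hu : LinearIndependent ℝ u) {w : Fin 3 → ℝ} (hw : ∀ i, u i ⬝ᵥ w = 0) : w = 0 := by
  have hspan : Submodule.span ℝ (Set.range u) = ⊤ :=
    hu.span_eq_top_of_card_eq_finrank (by simp)
  have hmem : w ∈ Submodule.span ℝ (Set.range u) := by rw [hspan]; trivial
  obtain ⟨c, hc⟩ := (Submodule.mem_span_range_iff_exists_fun ℝ).1 hmem
  have hw' : w = c 0 • u 0 + c 1 • u 1 + c 2 • u 2 := by
    rw [← hc, Fin.sum_univ_three]
  have : w ⬝ᵥ w = 0 := by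
    calc w ⬝ᵥ w = (c 0 • u 0 + c 1 • u 1 + c 2 • u 2) ⬝ᵥ w := by rw [← hw']
      _ = 0 := by simp [add_dotProduct, smul_dotProduct, hw]
  exact dotProduct_self_eq_zero.1 this

private lemma linIndep_of_affineIndep {q pa pb pc : Fin 3 → ℝ}
    (hq : AffineIndependent ℝ ![q, pa, pb, pc]) :
    LinearIndependent ℝ ![pa - q, pb - q, pc - q] := by
  have h := (affineIndependent_iff_linearIndependent_vsub ℝ ![q, pa, pb, pc] 0).1 hq
  let e : Fin 3 → {x : Fin 4 // x ≠ (0 : Fin 4)} := fun i => ⟨i.succ, Fin.succ_ne_zero i⟩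
  have he : Function.Injective e := fun i j hij => by
    simpa [e, Fin.succ_inj] using Subtype.ext_iff.1 hij
  have h2 := h.comp e he
  have heq : (fun i : Fin 3 => ![q, pa, pb, pc] ((e i) : Fin 4) -ᵥ ![q, pa, pb, pc] 0)
      = ![pa - q, pb - q, pc - q] := by
    funext i
    fin_cases i <;> simp [e]
  rwa [show ((fun i : {x : Fin 4 // x ≠ (0:Fin 4)} =>
      ![q, pa, pb, pc] (i : Fin 4) -ᵥ ![q, pa, pb, pc] 0) ∘ e) =
      (fun i : Fin 3 => ![q, pa, pb, pc] ((e i) : Fin 4) -ᵥ ![q, pa, pb, pc] 0) from rfl,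
    heq] at h2

/-- 3-valent vertex addition preserves infinitesimal motions: restriction is a linear
isomorphism of motion spaces; in particular, every infinitesimal motion of `(G, p)` extends
in exactly one way to an infinitesimal motion of `(G', p')`. -/
theorem threeValent_addition_motion {V : Type*} [Fintype V] [DecidableEq V]
    (G : SimpleGraph V) [DecidableRel G.Adj] (p : V → Fin 3 → ℝ)
    (hframe : ∀ i j : V, G.Adj i j → p i ≠ p j)
    (a b c : V) (hab : a ≠ b) (hac : a ≠ c) (hbc : b ≠ c)
    (q : Fin 3 → ℝ) (hq : AffineIndependent ℝ ![q, p a, p b, p c]) :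
    (∃ φ : motionSpace (addVertex G a b c) (fun x => x.elim q p) ≃ₗ[ℝ] motionSpace G p,
      ∀ (v : motionSpace (addVertex G a b c) (fun x => x.elim q p)) (i : V),
        (φ v : V → Fin 3 → ℝ) i = (v : Option V → Fin 3 → ℝ) (some i)) ∧
    ∀ v ∈ motionSpace G p, ∃! v' : Option V → Fin 3 → ℝ,
      v' ∈ motionSpace (addVertex G a b c) (fun x => x.elim q p) ∧
        ∀ i : V, v' (some i) = v i := by

  classical
  set G' := addVertex G a b c with hG'
  set p' : Option V → Fin 3 → ℝ := fun x => x.elim q p with hp'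
  -- the three edge directions at the new vertex
  set u : Fin 3 → Fin 3 → ℝ := ![p a - q, p b - q, p c - q] with hu
  have hulin : LinearIndependent ℝ u := linIndep_of_affineIndep hq
  -- the linear map w ↦ (⟨u i, w⟩)ᵢ and its inverse
  let L : (Fin 3 → ℝ) →ₗ[ℝ] (Fin 3 → ℝ) :=
    { toFun := fun w i => u i ⬝ᵥ w
      map_add' := fun x y => by funext i; exact dotProduct_add (u i) x y
      map_smul' := fun c x => by funext i; simp [dotProduct_smul] }
  have hLinj : Function.Injective L := by
    rw [← LinearMap.ker_eq_bot, LinearMap.ker_eq_bot']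
    intro w hw
    exact eq_zero_of_dot_eq_zero hulin (fun i => congrFun hw i)
  have hLsurj : Function.Surjective L := LinearMap.injective_iff_surjective.1 hLinj
  -- restriction is a motion
  have hres : ∀ v' ∈ motionSpace G' p', (fun i => v' (some i)) ∈ motionSpace G p := by
    intro v' hv' i j hij
    exact hv' (some i) (some j) hij
  -- key computation on new edges
  have hedge : ∀ (v' : Option V → Fin 3 → ℝ), v' ∈ motionSpace G' p' ↔
      ((fun i => v' (some i)) ∈ motionSpace G p ∧
        ∀ k : Fin 3, u k ⬝ᵥ v' none = u k ⬝ᵥ (v' (some (![a, b, c] k)))) := by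
    intro v'
    constructor
    · intro hv'
      refine ⟨hres v' hv', fun k => ?_⟩
      have key : ∀ x : V, (x = a ∨ x = b ∨ x = c) →
          (q - p x) ⬝ᵥ (v' none - v' (some x)) = 0 := fun x hx =>
        hv' none (some x) hx
      fin_cases k
      · have := key a (Or.inl rfl)
        have h2 : (p a - q) ⬝ᵥ (v' none - v' (some a)) = 0 := by
          have : (p a - q) = -(q - p a) := by ring
          rw [this, neg_dotProduct, key a (Or.inl rfl), neg_zero]
        simpa [hu, sub_dotProduct, dotProduct_sub, sub_eq_zero] using
          (by linarith [h2, (dotProduct_sub (p a - q) (v' none) (v' (some a)))] :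
            (p a - q) ⬝ᵥ v' none = (p a - q) ⬝ᵥ v' (some a))
      · have h2 : (p b - q) ⬝ᵥ (v' none - v' (some b)) = 0 := by
          have : (p b - q) = -(q - p b) := by ring
          rw [this, neg_dotProduct, key b (Or.inr (Or.inl rfl)), neg_zero]
        simpa [hu, sub_eq_zero, dotProduct_sub] using h2
      · have h2 : (p c - q) ⬝ᵥ (v' none - v' (some c)) = 0 := by
          have : (p c - q) = -(q - p c) := by ring
          rw [this, neg_dotProduct, key c (Or.inr (Or.inr rfl)), neg_zero]
        simpa [hu, sub_eq_zero, dotProduct_sub] using h2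
    · rintro ⟨hmot, hk⟩ x y hxy
      match x, y with
      | some i, some j => exact hmot i j hxy
      | none, some j =>
          have hj : j = a ∨ j = b ∨ j = c := hxy
          have : (p j - q) ⬝ᵥ (v' none - v' (some j)) = 0 := by
            rcases hj with rfl | rfl | rfl
            · have := hk 0; rw [dotProduct_sub]
              simpa [hu] using sub_eq_zero.2 this
            · have := hk 1; rw [dotProduct_sub]
              simpa [hu] using sub_eq_zero.2 this
            · have := hk 2; rw [dotProduct_sub]
              simpa [hu] using sub_eq_zero.2 this
          have hneg : (q - p j) = -(p j - q) := by ring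
          show (q - p j) ⬝ᵥ (v' none - v' (some j)) = 0
          rw [hneg, neg_dotProduct, this, neg_zero]
      | some i, none =>
          have hi : i = a ∨ i = b ∨ i = c := hxy
          have h1 : (q - p i) ⬝ᵥ (v' none - v' (some i)) = 0 := by
            have : (p i - q) ⬝ᵥ (v' none - v' (some i)) = 0 := by
              rcases hi with rfl | rfl | rfl
              · have := hk 0; rw [dotProduct_sub]
                simpa [hu] using sub_eq_zero.2 this
              · have := hk 1; rw [dotProduct_sub]
                simpa [hu] using sub_eq_zero.2 this
              · have := hk 2; rw [dotProduct_sub]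
                simpa [hu] using sub_eq_zero.2 this
            have hneg : (q - p i) = -(p i - q) := by ring
            rw [hneg, neg_dotProduct, this, neg_zero]
          show (p i - q) ⬝ᵥ (v' (some i) - v' none) = 0
          have : (p i - q) ⬝ᵥ (v' (some i) - v' none)
              = (q - p i) ⬝ᵥ (v' none - v' (some i)) := by
            rw [show p i - q = -(q - p i) from (neg_sub _ _).symm,
              show v' (some i) - v' none = -(v' none - v' (some i)) from (neg_sub _ _).symm,
              neg_dotProduct, dotProduct_neg, neg_neg]
          rw [this, h1]
      | none, none => exact absurd hxy (by simp [hG', addVertex])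
  -- the restriction linear map between motion spaces
  let R : motionSpace G' p' →ₗ[ℝ] motionSpace G p :=
    { toFun := fun v' => ⟨fun i => (v' : Option V → Fin 3 → ℝ) (some i), hres _ v'.2⟩
      map_add' := fun x y => rfl
      map_smul' := fun c x => rfl }
  have hRinj : Function.Injective R := by
    intro x y hxy
    have hsome : ∀ i : V, (x : Option V → Fin 3 → ℝ) (some i) = (y : Option V → Fin 3 → ℝ) (some i) :=
      fun i => congrFun (congrArg Subtype.val hxy) i
    have hx := ((hedge x).1 x.2).2
    have hy := ((hedge y).1 y.2).2
    have hn : (x : Option V → Fin 3 → ℝ) none = (y : Option V → Fin 3 → ℝ) none := by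
      apply hLinj
      funext k
      show u k ⬝ᵥ (x : Option V → Fin 3 → ℝ) none = u k ⬝ᵥ (y : Option V → Fin 3 → ℝ) none
      rw [hx k, hy k, hsome (![a, b, c] k)]
    ext z
    match z with
    | some i => exact congrFun (hsome i) _
    | none => exact congrFun hn _
  have hRsurj : Function.Surjective R := by
    intro v
    obtain ⟨w, hw⟩ := hLsurj (fun k => u k ⬝ᵥ (v : V → Fin 3 → ℝ) (![a, b, c] k))
    refine ⟨⟨fun x => x.elim w (v : V → Fin 3 → ℝ), ?_⟩, ?_⟩
    · refine (hedge _).2 ⟨v.2, fun k => ?_⟩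
      exact congrFun hw k
    · ext i; rfl
  let φ : motionSpace G' p' ≃ₗ[ℝ] motionSpace G p :=
    LinearEquiv.ofBijective R ⟨hRinj, hRsurj⟩
  refine ⟨⟨φ, fun v i => rfl⟩, ?_⟩
  intro v hv
  refine ⟨(φ.symm ⟨v, hv⟩ : motionSpace G' p'), ⟨(φ.symm ⟨v, hv⟩).2, fun i => ?_⟩, ?_⟩
  · exact congrFun (congrArg Subtype.val (φ.apply_symm_apply ⟨v, hv⟩)) i
  · rintro v'' ⟨hmem, hrest⟩
    have : φ ⟨v'', hmem⟩ = ⟨v, hv⟩ := by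
      apply Subtype.ext
      funext i
      exact hrest i
    have h2 : (⟨v'', hmem⟩ : motionSpace G' p') = φ.symm ⟨v, hv⟩ := by
      rw [← this, φ.symm_apply_apply]
    exact congrArg Subtype.val h2
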